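/- Let p ≥ 1 be an integer and a, c, a', c' ∈ ℤ. The points of the torus ℝ²/ℤ² represented by (a/p, c/p) and (a'/p, c'/p) lie in the same SL(2,ℤ)-orbit if and only if gcd(gcd(a, c), p) = gcd(gcd(a', c'), p). -/

import Mathlib

/-- The integer lattice `ℤ² ⊂ ℝ²`, as an additive subgroup of `Fin 2 → ℝ`. -/
def intLattice : AddSubgroup (Fin 2 → ℝ) where
  carrier := {v | ∀ i, ∃ n : ℤ, v i = (n : ℝ)}
  zero_mem' := fun i => ⟨0, by simp⟩
  add_mem' := by
    intro a b ha hb i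
    obtain ⟨n, hn⟩ := ha i
    obtain ⟨m, hm⟩ := hb i
    exact ⟨n + m, by simp [hn, hm]⟩
  neg_mem' := by
    intro a ha i
    obtain ⟨n, hn⟩ := ha i
    exact ⟨-n, by simp [hn]⟩

/-- The torus `ℝ²/ℤ²`. -/
abbrev Torus : Type := (Fin 2 → ℝ) ⧸ intLattice

/-- The natural action of `SL(2,ℤ)` on `ℝ²` by matrix multiplication on column vectors. -/
noncomputable def sl2zAct (A : Matrix.SpecialLinearGroup (Fin 2) ℤ) (v : Fin 2 → ℝ) :
    Fin 2 → ℝ :=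
  ((A : Matrix (Fin 2) (Fin 2) ℤ).map fun n => (n : ℝ)).mulVec v

/-- The `SL(2,ℤ)`-orbit of the torus point represented by `v ∈ ℝ²`. -/
def torusOrbit (v : Fin 2 → ℝ) : Set Torus :=
  {x | ∃ A : Matrix.SpecialLinearGroup (Fin 2) ℤ,
    (QuotientAddGroup.mk (sl2zAct A v) : Torus) = x}


/-- Integer-level relation: some SL2 matrix (given by entries) carries `(a,c)` to
`(a',c')` mod `p`. -/
def SL2Rel (p : ℕ) (a c a' c' : ℤ) : Prop :=
  ∃ x y z w : ℤ, x * w - y * z = 1 ∧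
    (p : ℤ) ∣ (x * a + y * c - a') ∧ (p : ℤ) ∣ (z * a + w * c - c')

lemma SL2Rel_symm {p : ℕ} {a c a' c' : ℤ} (h : SL2Rel p a c a' c') :
    SL2Rel p a' c' a c := by
  obtain ⟨x, y, z, w, hdet, ⟨k1, h1⟩, ⟨k2, h2⟩⟩ := h
  refine ⟨w, -y, -z, x, by linarith, ⟨y * k2 - w * k1, by linear_combination a * hdet - w * h1 + y * h2⟩,
    ⟨z * k1 - x * k2, by linear_combination c * hdet + z * h1 - x * h2⟩⟩

lemma SL2Rel_trans {p : ℕ} {a c a' c' a'' c'' : ℤ} (h : SL2Rel p a c a' c')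
    (h' : SL2Rel p a' c' a'' c'') : SL2Rel p a c a'' c'' := by
  obtain ⟨x, y, z, w, hdet, ⟨k1, h1⟩, ⟨k2, h2⟩⟩ := h
  obtain ⟨x', y', z', w', hdet', ⟨k3, h3⟩, ⟨k4, h4⟩⟩ := h'
  refine ⟨x' * x + y' * z, x' * y + y' * w, z' * x + w' * z, z' * y + w' * w,
    by linear_combination (x * w - y * z) * hdet' + hdet,
    ⟨x' * k1 + y' * k2 + k3, by linear_combination x' * h1 + y' * h2 + h3⟩,
    ⟨z' * k1 + w' * k2 + k4, by linear_combination z' * h1 + w' * h2 + h4⟩⟩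

/-- Any `(a,c)` is related to `(gcd(gcd(a,c),p), 0)`. -/
lemma SL2Rel_canon (p : ℕ) (hp : 1 ≤ p) (a c : ℤ) :
    SL2Rel p a c (Nat.gcd (Int.gcd a c) p) 0 := by
  -- step 1 : relate (a,c) to (d,0) with d = Int.gcd a c
  have step1 : SL2Rel p a c (Int.gcd a c) 0 := by
    rcases eq_or_ne (Int.gcd a c) 0 with hd | hd
    · obtain ⟨ha, hc⟩ := Int.gcd_eq_zero_iff.mp hd
      exact ⟨1, 0, 0, 1, by ring, ⟨0, by simp [ha, hc, hd]⟩, ⟨0, by simp [ha, hc]⟩⟩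
    · set d : ℤ := (Int.gcd a c : ℤ) with hdef
      have hd0 : d ≠ 0 := Int.natCast_ne_zero.mpr hd
      obtain ⟨a1, ha1⟩ : d ∣ a := Int.gcd_dvd_left a c
      obtain ⟨c1, hc1⟩ : d ∣ c := Int.gcd_dvd_right a c
      have hbez : d = a * Int.gcdA a c + c * Int.gcdB a c := Int.gcd_eq_gcd_ab a c
      have hkey : Int.gcdA a c * a1 + Int.gcdB a c * c1 = 1 := by
        have : d * (Int.gcdA a c * a1 + Int.gcdB a c * c1) = d * 1 := by
          rw [mul_one]; nth_rewrite 2 [hbez]; rw [ha1, hc1]; ring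
        exact mul_left_cancel₀ hd0 this
      refine ⟨Int.gcdA a c, Int.gcdB a c, -c1, a1, by linarith,
        ⟨0, by rw [hbez, ha1, hc1]; ring⟩,
        ⟨0, by rw [ha1, hc1]; ring⟩⟩
  -- step 2 : relate (d,0) to (g,0) with g = gcd(d,p)
  have step2 : SL2Rel p (Int.gcd a c) 0 (Nat.gcd (Int.gcd a c) p) 0 := by
    set d : ℤ := (Int.gcd a c : ℤ) with hdef
    set g : ℤ := (Nat.gcd (Int.gcd a c) p : ℤ) with hgdef
    have hg : g = Int.gcd d (p : ℤ) := by simp [hgdef, hdef, Int.gcd]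
    have hgnat : 0 < Nat.gcd (Int.gcd a c) p := Nat.gcd_pos_of_pos_right _ hp
    have hg0 : g ≠ 0 := by rw [hgdef]; exact_mod_cast hgnat.ne'
    obtain ⟨d1, hd1⟩ : g ∣ d := hg ▸ Int.gcd_dvd_left _ _
    obtain ⟨p1, hp1⟩ : g ∣ (p : ℤ) := hg ▸ Int.gcd_dvd_right _ _
    have hbez : g = d * Int.gcdA d p + p * Int.gcdB d p := hg ▸ Int.gcd_eq_gcd_ab d p
    set x := Int.gcdA d p
    set y := Int.gcdB d p
    have hkey : x * d1 + y * p1 = 1 := by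
      have : g * (x * d1 + y * p1) = g * 1 := by
        rw [mul_one]; nth_rewrite 2 [hbez]; rw [hd1, hp1]; ring
      exact mul_left_cancel₀ hg0 this
    exact ⟨x, -y, p1, d1, by linarith,
      ⟨-y, by linear_combination -hbez⟩,
      ⟨d1, by linear_combination p1 * hd1 - d1 * hp1⟩⟩
  exact SL2Rel_trans step1 step2

lemma SL2Rel_gcd_dvd {p : ℕ} {a c a' c' : ℤ} (h : SL2Rel p a c a' c') :
    Nat.gcd (Int.gcd a c) p ∣ Nat.gcd (Int.gcd a' c') p := by
  obtain ⟨x, y, z, w, hdet, ⟨k1, h1⟩, ⟨k2, h2⟩⟩ := h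
  set g : ℕ := Nat.gcd (Int.gcd a c) p
  have hga : (g : ℤ) ∣ a :=
    dvd_trans (Int.natCast_dvd_natCast.mpr (Nat.gcd_dvd_left _ _)) (Int.gcd_dvd_left _ _)
  have hgc : (g : ℤ) ∣ c :=
    dvd_trans (Int.natCast_dvd_natCast.mpr (Nat.gcd_dvd_left _ _)) (Int.gcd_dvd_right _ _)
  have hgp : (g : ℤ) ∣ (p : ℤ) := Int.natCast_dvd_natCast.mpr (Nat.gcd_dvd_right _ _)
  have ha' : (g : ℤ) ∣ a' := by
    have : a' = x * a + y * c - (p : ℤ) * k1 := by linarith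
    rw [this]
    exact dvd_sub (dvd_add (hga.mul_left x) (hgc.mul_left y)) (hgp.mul_right k1)
  have hc' : (g : ℤ) ∣ c' := by
    have : c' = z * a + w * c - (p : ℤ) * k2 := by linarith
    rw [this]
    exact dvd_sub (dvd_add (hga.mul_left z) (hgc.mul_left w)) (hgp.mul_right k2)
  exact Nat.dvd_gcd (Int.natCast_dvd_natCast.mp (Int.dvd_coe_gcd ha' hc'))
    (Int.natCast_dvd_natCast.mp hgp)

lemma myDivHelper (p : ℕ) (hp : 1 ≤ p) (m a' : ℤ) :
    (∃ n : ℤ, -((m : ℝ) / p) + (a' : ℝ) / p = n) ↔ (p : ℤ) ∣ (m - a') := by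
  have hp0 : (p : ℝ) ≠ 0 := by positivity
  have key : ∀ n : ℤ, (-((m : ℝ) / p) + (a' : ℝ) / p = n) ↔ ((a' : ℝ) - m = n * p) := by
    intro n
    rw [show -((m : ℝ) / p) + (a' : ℝ) / p = ((a' : ℝ) - m) / p by ring, div_eq_iff hp0]
  constructor
  · rintro ⟨n, hn⟩
    rw [key] at hn
    have h5 : a' - m = n * p := by exact_mod_cast hn
    exact ⟨-n, by linarith⟩
  · rintro ⟨k, hk⟩
    refine ⟨-k, ?_⟩
    rw [key]
    push_cast
    have : (m : ℝ) - a' = p * k := by exact_mod_cast hk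
    linarith

lemma bridge (p : ℕ) (hp : 1 ≤ p) (a c a' c' : ℤ)
    (A : Matrix.SpecialLinearGroup (Fin 2) ℤ) :
    ((QuotientAddGroup.mk (sl2zAct A ![(a : ℝ) / p, (c : ℝ) / p]) : Torus)
        = (QuotientAddGroup.mk ![(a' : ℝ) / p, (c' : ℝ) / p] : Torus)) ↔
      ((p : ℤ) ∣ ((A : Matrix (Fin 2) (Fin 2) ℤ) 0 0 * a + (A : Matrix (Fin 2) (Fin 2) ℤ) 0 1 * c - a')
        ∧ (p : ℤ) ∣ ((A : Matrix (Fin 2) (Fin 2) ℤ) 1 0 * a + (A : Matrix (Fin 2) (Fin 2) ℤ) 1 1 * c - c')) := by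
  have hp0 : (p : ℝ) ≠ 0 := by positivity
  rw [QuotientAddGroup.eq]
  have hmem : (-(sl2zAct A ![(a : ℝ) / p, (c : ℝ) / p]) + ![(a' : ℝ) / p, (c' : ℝ) / p] ∈ intLattice)
      ↔ ∀ i : Fin 2, ∃ n : ℤ,
        (-(sl2zAct A ![(a : ℝ) / p, (c : ℝ) / p]) + ![(a' : ℝ) / p, (c' : ℝ) / p]) i = n := Iff.rfl
  rw [hmem, Fin.forall_fin_two]
  have e0 : sl2zAct A ![(a : ℝ) / p, (c : ℝ) / p] 0
      = ((((A : Matrix (Fin 2) (Fin 2) ℤ) 0 0 * a + (A : Matrix (Fin 2) (Fin 2) ℤ) 0 1 * c : ℤ)) : ℝ) / p := by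
    simp [sl2zAct, Matrix.mulVec, dotProduct, Fin.sum_univ_two, Matrix.map_apply]
    ring
  have e1 : sl2zAct A ![(a : ℝ) / p, (c : ℝ) / p] 1
      = ((((A : Matrix (Fin 2) (Fin 2) ℤ) 1 0 * a + (A : Matrix (Fin 2) (Fin 2) ℤ) 1 1 * c : ℤ)) : ℝ) / p := by
    simp [sl2zAct, Matrix.mulVec, dotProduct, Fin.sum_univ_two, Matrix.map_apply]
    ring
  simp only [Pi.add_apply, Pi.neg_apply, e0, e1, Matrix.cons_val_zero, Matrix.cons_val_one,
    Matrix.head_cons]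
  rw [myDivHelper p hp _ a', myDivHelper p hp _ c']

theorem same_sl2z_orbit_iff_gcd_eq_aux (p : ℕ) (hp : 1 ≤ p) (a c a' c' : ℤ) :
    (∃ A : Matrix.SpecialLinearGroup (Fin 2) ℤ,
        (QuotientAddGroup.mk (sl2zAct A ![(a : ℝ) / p, (c : ℝ) / p]) : Torus)
          = (QuotientAddGroup.mk ![(a' : ℝ) / p, (c' : ℝ) / p] : Torus)) ↔
      Nat.gcd (Int.gcd a c) p = Nat.gcd (Int.gcd a' c') p := by
  have main : (∃ A : Matrix.SpecialLinearGroup (Fin 2) ℤ,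
      (QuotientAddGroup.mk (sl2zAct A ![(a : ℝ) / p, (c : ℝ) / p]) : Torus)
        = (QuotientAddGroup.mk ![(a' : ℝ) / p, (c' : ℝ) / p] : Torus)) ↔ SL2Rel p a c a' c' := by
    constructor
    · rintro ⟨A, hA⟩
      rw [bridge p hp a c a' c' A] at hA
      have hdet := A.2
      rw [Matrix.det_fin_two] at hdet
      exact ⟨_, _, _, _, hdet, hA.1, hA.2⟩
    · rintro ⟨x, y, z, w, hdet, h1, h2⟩
      refine ⟨(⟨!![x, y; z, w], by simp [Matrix.det_fin_two_of]; linarith⟩ : Matrix.SpecialLinearGroup (Fin 2) ℤ), ?_⟩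
      refine (bridge p hp a c a' c' _).mpr ?_
      simpa using ⟨h1, h2⟩
  rw [main]
  constructor
  · intro h
    exact Nat.dvd_antisymm (SL2Rel_gcd_dvd h) (SL2Rel_gcd_dvd (SL2Rel_symm h))
  · intro h
    exact SL2Rel_trans (SL2Rel_canon p hp a c) (h ▸ SL2Rel_symm (SL2Rel_canon p hp a' c'))

/-- The torus points `(a/p, c/p)` and `(a'/p, c'/p)` lie in the same `SL(2,ℤ)`-orbit
if and only if `gcd(gcd(a,c),p) = gcd(gcd(a',c'),p)`. -/
theorem same_sl2z_orbit_iff_gcd_eq (p : ℕ) (hp : 1 ≤ p) (a c a' c' : ℤ) :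
    (∃ A : Matrix.SpecialLinearGroup (Fin 2) ℤ,
        (QuotientAddGroup.mk (sl2zAct A ![(a : ℝ) / p, (c : ℝ) / p]) : Torus)
          = (QuotientAddGroup.mk ![(a' : ℝ) / p, (c' : ℝ) / p] : Torus)) ↔
      Nat.gcd (Int.gcd a c) p = Nat.gcd (Int.gcd a' c') p := by
  exact same_sl2z_orbit_iff_gcd_eq_aux p hp a c a' c'
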